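/- arXiv:2004.07374 — 5 statements merged into one kernel-verified Lean document; each statement's English description precedes it below -/
import Mathlib

section
/- The Jacobi ring ℂ[x₁,x₂]/(3x₁²x₂, x₁³ + 3x₂²) of the polynomial w = x₁³x₂ + x₂³ is a 7-dimensional ℂ-vector space with basis {1, x₁, x₁², x₁³, x₁⁴, x₂, x₁x₂}. -/
open MvPolynomial

private noncomputable def ee (i j : ℕ) : Fin 2 →₀ ℕ := Finsupp.single 0 i + Finsupp.single 1 j

private lemma ee_apply0 (i j : ℕ) : ee i j 0 = i := by simp [ee]
private lemma ee_apply1 (i j : ℕ) : ee i j 1 = j := by simp [ee]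

private lemma ee_eq_iff {i j k l : ℕ} : ee i j = ee k l ↔ i = k ∧ j = l := by
  constructor
  · intro h
    constructor
    · have := congrArg (fun s => s 0) h; simpa [ee_apply0] using this
    · have := congrArg (fun s => s 1) h; simpa [ee_apply1] using this
  · rintro ⟨rfl, rfl⟩; rfl

private lemma ee_le_iff {i j k l : ℕ} : ee i j ≤ ee k l ↔ i ≤ k ∧ j ≤ l := by
  rw [Finsupp.le_iff]
  constructor
  · intro h
    constructor
    · by_cases hi : i = 0
      · omega
      · have := h 0 (by simp [ee, Finsupp.single_apply, hi]); simpa [ee_apply0, ee_apply1] using this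
    · by_cases hj : j = 0
      · omega
      · have := h 1 (by simp [ee, Finsupp.single_apply, hj]); simpa [ee_apply0, ee_apply1] using this
  · rintro ⟨h1, h2⟩ s _
    fin_cases s <;> simpa [ee_apply0, ee_apply1]

private lemma ee_sub (i j k l : ℕ) : ee k l - ee i j = ee (k - i) (l - j) := by
  ext s; fin_cases s <;> simp [Finsupp.tsub_apply, ee_apply0, ee_apply1]

private lemma ee_add (i j k l : ℕ) : ee i j + ee k l = ee (i + k) (j + l) := by
  simp only [ee, Finsupp.single_add]; abel

private lemma X0_pow (n : ℕ) : (X 0 ^ n : MvPolynomial (Fin 2) ℂ) = monomial (ee n 0) 1 := by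
  rw [X_pow_eq_monomial]; congr 1; simp [ee]

private lemma X1_pow (n : ℕ) : (X 1 ^ n : MvPolynomial (Fin 2) ℂ) = monomial (ee 0 n) 1 := by
  rw [X_pow_eq_monomial]; congr 1; simp [ee]

private lemma X0_form : (X 0 : MvPolynomial (Fin 2) ℂ) = monomial (ee 1 0) 1 := by
  have := X0_pow 1; simpa using this

private lemma X1_form : (X 1 : MvPolynomial (Fin 2) ℂ) = monomial (ee 0 1) 1 := by
  have := X1_pow 1; simpa using this

private lemma ee00 : ee 0 0 = 0 := by simp [ee]

private lemma s_one (r : ℂ) : r • (1 : MvPolynomial (Fin 2) ℂ) = monomial (ee 0 0) r := by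
  rw [smul_eq_C_mul, mul_one, C_apply, ee00]

private lemma s_pow (r : ℂ) (n : ℕ) :
    r • (X 0 ^ n : MvPolynomial (Fin 2) ℂ) = monomial (ee n 0) r := by
  rw [X0_pow, MvPolynomial.smul_monomial, smul_eq_mul, mul_one]

private lemma s_X0 (r : ℂ) : r • (X 0 : MvPolynomial (Fin 2) ℂ) = monomial (ee 1 0) r := by
  have := s_pow r 1; simpa using this

private lemma s_X1 (r : ℂ) : r • (X 1 : MvPolynomial (Fin 2) ℂ) = monomial (ee 0 1) r := by
  rw [X1_form, MvPolynomial.smul_monomial, smul_eq_mul, mul_one]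

private lemma s_X0X1 (r : ℂ) :
    r • (X 0 * X 1 : MvPolynomial (Fin 2) ℂ) = monomial (ee 1 1) r := by
  rw [X0_form, X1_form, monomial_mul, ee_add, MvPolynomial.smul_monomial]
  norm_num

private lemma g1_eq : (3 * X 0 ^ 2 * X 1 : MvPolynomial (Fin 2) ℂ) = monomial (ee 2 1) 3 := by
  have h3 : C (3:ℂ) = (3 : MvPolynomial (Fin 2) ℂ) := by exact_mod_cast rfl
  rw [← h3, X0_pow, X1_form, C_mul_monomial, monomial_mul, ee_add]
  norm_num

private lemma g2_eq : (X 0 ^ 3 + 3 * X 1 ^ 2 : MvPolynomial (Fin 2) ℂ)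
    = monomial (ee 3 0) 1 + monomial (ee 0 2) 3 := by
  have h3 : C (3:ℂ) = (3 : MvPolynomial (Fin 2) ℂ) := by exact_mod_cast rfl
  rw [← h3, X0_pow, X1_pow, C_mul_monomial]
  norm_num

set_option maxHeartbeats 2000000 in
set_option synthInstance.maxHeartbeats 200000 in
/-- The Jacobi ring `ℂ[x₁,x₂]/(3x₁²x₂, x₁³+3x₂²)` of `w = x₁³x₂ + x₂³` is a
7-dimensional `ℂ`-vector space with basis `{1, x₁, x₁², x₁³, x₁⁴, x₂, x₁x₂}`. -/
theorem jacobi_ring_E7_basis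
    (I : Ideal (MvPolynomial (Fin 2) ℂ))
    (hI : I = Ideal.span {3 * X 0 ^ 2 * X 1, X 0 ^ 3 + 3 * X 1 ^ 2})
    (f : Fin 7 → (MvPolynomial (Fin 2) ℂ ⧸ I))
    (hf : f = fun i => Ideal.Quotient.mk I
      (![1, X 0, X 0 ^ 2, X 0 ^ 3, X 0 ^ 4, X 1, X 0 * X 1] i)) :
    LinearIndependent ℂ f ∧ Submodule.span ℂ (Set.range f) = ⊤ ∧
      Module.finrank ℂ (MvPolynomial (Fin 2) ℂ ⧸ I) = 7 := by
  have hsmul : ∀ (r : ℂ) (q : MvPolynomial (Fin 2) ℂ),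
      Ideal.Quotient.mk I (r • q) = r • Ideal.Quotient.mk I q := by
    intro r q
    rw [← Ideal.Quotient.mkₐ_eq_mk ℂ]
    exact map_smul (Ideal.Quotient.mkₐ ℂ I) r q
  have hC3 : (C (3:ℂ) : MvPolynomial (Fin 2) ℂ) = 3 := by exact_mod_cast rfl
  -- linear independence
  have hli : LinearIndependent ℂ f := by
    rw [Fintype.linearIndependent_iff]
    intro c hc
    rw [hf] at hc
    have hc' : Ideal.Quotient.mk I
        (∑ i : Fin 7, c i • (![1, X 0, X 0 ^ 2, X 0 ^ 3, X 0 ^ 4, X 1, X 0 * X 1] i)) = 0 := by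
      rw [map_sum]; simp only [hsmul]; exact hc
    have hP := Ideal.Quotient.eq_zero_iff_mem.mp hc'
    rw [hI, Ideal.mem_span_pair] at hP
    obtain ⟨a, b, hab⟩ := hP
    have hforms : (∑ i : Fin 7, c i • (![1, X 0, X 0 ^ 2, X 0 ^ 3, X 0 ^ 4, X 1, X 0 * X 1] i))
        = monomial (ee 0 0) (c 0) + monomial (ee 1 0) (c 1) + monomial (ee 2 0) (c 2)
          + monomial (ee 3 0) (c 3) + monomial (ee 4 0) (c 4) + monomial (ee 0 1) (c 5)
          + monomial (ee 1 1) (c 6) := by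
      rw [Fin.sum_univ_seven]
      simp only [Matrix.cons_val_zero, Matrix.cons_val_one, Matrix.head_cons,
        Matrix.cons_val_two, Matrix.tail_cons, Matrix.cons_val_three, Matrix.cons_val_four,
        Matrix.cons_val_succ]
      rw [show (![1, X 0, X 0 ^ 2, X 0 ^ 3, X 0 ^ 4, X 1, X 0 * X 1] :
            Fin 7 → MvPolynomial (Fin 2) ℂ) 5 = X 1 from rfl,
        show (![1, X 0, X 0 ^ 2, X 0 ^ 3, X 0 ^ 4, X 1, X 0 * X 1] :
            Fin 7 → MvPolynomial (Fin 2) ℂ) 6 = X 0 * X 1 from rfl]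
      rw [s_one, s_X0, s_pow, s_pow, s_pow, s_X1, s_X0X1]
    rw [g1_eq, g2_eq, hforms] at hab
    have h00 := congrArg (coeff (ee 0 0)) hab
    have h10 := congrArg (coeff (ee 1 0)) hab
    have h20 := congrArg (coeff (ee 2 0)) hab
    have h01 := congrArg (coeff (ee 0 1)) hab
    have h11 := congrArg (coeff (ee 1 1)) hab
    have h30 := congrArg (coeff (ee 3 0)) hab
    have h02 := congrArg (coeff (ee 0 2)) hab
    have h40 := congrArg (coeff (ee 4 0)) hab
    have h12 := congrArg (coeff (ee 1 2)) hab
    simp [coeff_add, mul_add, coeff_mul_monomial', coeff_monomial, ee_le_iff, ee_eq_iff,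
      ee_sub] at h00 h10 h20 h01 h11 h30 h02 h40 h12
    intro i
    fin_cases i
    · exact h00.symm
    · exact h10.symm
    · exact h20.symm
    · exact h30.symm.trans h02
    · exact h40.symm.trans h12
    · exact h01.symm
    · exact h11.symm
  -- key ideal-membership facts
  have hx2y : Ideal.Quotient.mk I (X 0 ^ 2 * X 1) = 0 := by
    have h3 : Ideal.Quotient.mk I (3 * (X 0 ^ 2 * X 1)) = 0 := by
      rw [Ideal.Quotient.eq_zero_iff_mem, hI, Ideal.mem_span_pair]
      exact ⟨1, 0, by ring⟩
    have h := hsmul 3 (X 0 ^ 2 * X 1)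
    rw [smul_eq_C_mul, hC3] at h
    have e : (3:ℂ) • Ideal.Quotient.mk I (X 0 ^ 2 * X 1) = 0 := h.symm.trans h3
    calc Ideal.Quotient.mk I (X 0 ^ 2 * X 1)
        = ((1:ℂ)/3) • ((3:ℂ) • Ideal.Quotient.mk I (X 0 ^ 2 * X 1)) := by
          rw [smul_smul]; norm_num
      _ = 0 := by rw [e, smul_zero]
  have hx5 : Ideal.Quotient.mk I (X 0 ^ 5) = 0 := by
    rw [Ideal.Quotient.eq_zero_iff_mem, hI, Ideal.mem_span_pair]
    exact ⟨-X 1, X 0 ^ 2, by ring⟩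
  have hx3y : Ideal.Quotient.mk I (X 0 ^ 3 * X 1) = 0 := by
    have : (X 0 ^ 3 * X 1 : MvPolynomial (Fin 2) ℂ) = X 0 * (X 0 ^ 2 * X 1) := by ring
    rw [this, map_mul, hx2y, mul_zero]
  have hx4y : Ideal.Quotient.mk I (X 0 ^ 4 * X 1) = 0 := by
    have : (X 0 ^ 4 * X 1 : MvPolynomial (Fin 2) ℂ) = X 0 ^ 2 * (X 0 ^ 2 * X 1) := by ring
    rw [this, map_mul, hx2y, mul_zero]
  have hy2 : Ideal.Quotient.mk I (X 1 ^ 2)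
      = ((-1:ℂ)/3) • Ideal.Quotient.mk I (X 0 ^ 3) := by
    have hg2 : Ideal.Quotient.mk I (X 0 ^ 3 + 3 * X 1 ^ 2) = 0 := by
      rw [Ideal.Quotient.eq_zero_iff_mem, hI, Ideal.mem_span_pair]
      exact ⟨0, 1, by ring⟩
    have e1 : Ideal.Quotient.mk I (X 0 ^ 3) + (3:ℂ) • Ideal.Quotient.mk I (X 1 ^ 2) = 0 := by
      rw [← hsmul, smul_eq_C_mul, hC3, ← map_add]
      exact hg2
    have e2 : (3:ℂ) • Ideal.Quotient.mk I (X 1 ^ 2) = -Ideal.Quotient.mk I (X 0 ^ 3) :=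
      eq_neg_of_add_eq_zero_left (by rw [add_comm]; exact e1)
    have e3 : ((-1:ℂ)/3) • Ideal.Quotient.mk I (X 0 ^ 3)
        = ((1:ℂ)/3) • (-Ideal.Quotient.mk I (X 0 ^ 3)) := by
      rw [neg_div, neg_smul, smul_neg]
    rw [e3, ← e2, smul_smul]
    norm_num
  -- span
  have hmem : ∀ i : Fin 7, f i ∈ Submodule.span ℂ (Set.range f) :=
    fun i => Submodule.subset_span ⟨i, rfl⟩
  have b0 : Ideal.Quotient.mk I 1 ∈ Submodule.span ℂ (Set.range f) := by
    have := hmem 0; rw [congrFun hf 0] at this; exact this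
  have b1 : Ideal.Quotient.mk I (X 0) ∈ Submodule.span ℂ (Set.range f) := by
    have := hmem 1; rw [congrFun hf 1] at this; exact this
  have b2 : Ideal.Quotient.mk I (X 0 ^ 2) ∈ Submodule.span ℂ (Set.range f) := by
    have := hmem 2; rw [congrFun hf 2] at this; exact this
  have b3 : Ideal.Quotient.mk I (X 0 ^ 3) ∈ Submodule.span ℂ (Set.range f) := by
    have := hmem 3; rw [congrFun hf 3] at this; exact this
  have b4 : Ideal.Quotient.mk I (X 0 ^ 4) ∈ Submodule.span ℂ (Set.range f) := by
    have := hmem 4; rw [congrFun hf 4] at this; exact this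
  have b5 : Ideal.Quotient.mk I (X 1) ∈ Submodule.span ℂ (Set.range f) := by
    have := hmem 5; rw [congrFun hf 5] at this; exact this
  have b6 : Ideal.Quotient.mk I (X 0 * X 1) ∈ Submodule.span ℂ (Set.range f) := by
    have := hmem 6; rw [congrFun hf 6] at this; exact this
  have hprod : ∀ (i : Fin 7) (n : Fin 2),
      Ideal.Quotient.mk I ((![1, X 0, X 0 ^ 2, X 0 ^ 3, X 0 ^ 4, X 1, X 0 * X 1] i) * X n)
        ∈ Submodule.span ℂ (Set.range f) := by
    simp only [Fin.forall_fin_succ, Fin.forall_fin_two, Matrix.cons_val_zero,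
      Matrix.cons_val_succ, IsEmpty.forall_iff, and_true, Fin.succ_zero_eq_one]
    repeat' apply And.intro
    · rw [show ((1 : MvPolynomial (Fin 2) ℂ) * X 0) = X 0 by ring]; exact b1
    · rw [show ((1 : MvPolynomial (Fin 2) ℂ) * X 1) = X 1 by ring]; exact b5
    · rw [show ((X 0 : MvPolynomial (Fin 2) ℂ) * X 0) = X 0 ^ 2 by ring]; exact b2
    · exact b6
    · rw [show ((X 0 ^ 2 : MvPolynomial (Fin 2) ℂ) * X 0) = X 0 ^ 3 by ring]; exact b3
    · rw [hx2y]; exact zero_mem _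
    · rw [show ((X 0 ^ 3 : MvPolynomial (Fin 2) ℂ) * X 0) = X 0 ^ 4 by ring]; exact b4
    · rw [hx3y]; exact zero_mem _
    · rw [show ((X 0 ^ 4 : MvPolynomial (Fin 2) ℂ) * X 0) = X 0 ^ 5 by ring, hx5]
      exact zero_mem _
    · rw [hx4y]; exact zero_mem _
    · rw [show ((X 1 : MvPolynomial (Fin 2) ℂ) * X 0) = X 0 * X 1 by ring]; exact b6
    · rw [show ((X 1 : MvPolynomial (Fin 2) ℂ) * X 1) = X 1 ^ 2 by ring, hy2]
      exact Submodule.smul_mem _ _ b3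
    · rw [show ((X 0 * X 1 : MvPolynomial (Fin 2) ℂ) * X 0) = X 0 ^ 2 * X 1 by ring, hx2y]
      exact zero_mem _
    · rw [show ((X 0 * X 1 : MvPolynomial (Fin 2) ℂ) * X 1) = X 0 * X 1 ^ 2 by ring,
        map_mul, hy2, mul_smul_comm, ← map_mul,
        show ((X 0 : MvPolynomial (Fin 2) ℂ) * X 0 ^ 3) = X 0 ^ 4 by ring]
      exact Submodule.smul_mem _ _ b4
  have hclose : ∀ (n : Fin 2), ∀ z ∈ Submodule.span ℂ (Set.range f),
      z * Ideal.Quotient.mk I (X n) ∈ Submodule.span ℂ (Set.range f) := by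
    intro n z hz
    induction hz using Submodule.span_induction with
    | mem x hx =>
        obtain ⟨i, rfl⟩ := hx
        have key : f i * Ideal.Quotient.mk I (X n)
            = Ideal.Quotient.mk I ((![1, X 0, X 0 ^ 2, X 0 ^ 3, X 0 ^ 4, X 1, X 0 * X 1] i)
                * X n) := by
          rw [map_mul, hf]
        rw [key]
        exact hprod i n
    | zero => rw [zero_mul]; exact zero_mem _
    | add x y hx hy ihx ihy => rw [add_mul]; exact add_mem ihx ihy
    | smul a x hx ih => rw [smul_mul_assoc]; exact Submodule.smul_mem _ a ih
  have hall : ∀ p : MvPolynomial (Fin 2) ℂ,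
      Ideal.Quotient.mk I p ∈ Submodule.span ℂ (Set.range f) := by
    intro p
    induction p using MvPolynomial.induction_on with
    | C a =>
        have : (C a : MvPolynomial (Fin 2) ℂ) = a • 1 := by rw [smul_eq_C_mul, mul_one]
        rw [this, hsmul]
        exact Submodule.smul_mem _ _ b0
    | add p q hp hq => rw [map_add]; exact add_mem hp hq
    | mul_X p n hp => rw [map_mul]; exact hclose n _ hp
  have hspan : Submodule.span ℂ (Set.range f) = ⊤ := by
    rw [Submodule.eq_top_iff']
    intro z
    obtain ⟨p, rfl⟩ := Ideal.Quotient.mk_surjective z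
    exact hall p
  refine ⟨hli, hspan, ?_⟩
  rw [Module.finrank_eq_card_basis (Module.Basis.mk hli hspan.ge), Fintype.card_fin]
end

section
/- Let ℓ ≥ 4 and n ≥ 1, and let Γ = { (t₀,…,t_{n+1}) ∈ (ℂ*)^{n+2} : t₁^{ℓ−1}t₂ = t₂² = t₃² = ⋯ = t_{n+1}² = t₀t₁⋯t_{n+1} } with character χ(γ) = t₂². Then ker χ is isomorphic as a group to μ_{2ℓ−2} × (μ₂)^{n−1}. -/
open Finset

def Gsub (k m : ℕ) : Subgroup (Fin (m + 3) → ℂˣ) where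
  carrier := {t | t 1 ^ (k + 3) * t 2 = 1 ∧
    (∀ i : Fin (m + 3), 3 ≤ (i : ℕ) → t i ^ 2 = 1) ∧
    (∏ i, t i) = 1 ∧ t 2 ^ 2 = 1}
  one_mem' := by simp
  mul_mem' := by
    rintro a b ⟨h1, h2, h3, h4⟩ ⟨g1, g2, g3, g4⟩
    refine ⟨?_, fun i hi => ?_, ?_, ?_⟩ <;>
      simp only [Pi.mul_apply, mul_pow, Finset.prod_mul_distrib]
    · rw [mul_mul_mul_comm, h1, g1, one_mul]
    · rw [h2 i hi, g2 i hi, one_mul]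
    · rw [h3, g3, one_mul]
    · rw [h4, g4, one_mul]
  inv_mem' := by
    rintro a ⟨h1, h2, h3, h4⟩
    refine ⟨?_, fun i hi => ?_, ?_, ?_⟩
    · show (a 1)⁻¹ ^ (k+3) * (a 2)⁻¹ = 1
      rw [inv_pow, ← mul_inv, h1, inv_one]
    · show (a i)⁻¹ ^ 2 = 1
      rw [inv_pow, h2 i hi, inv_one]
    · show (∏ i, (a i)⁻¹) = 1
      rw [Finset.prod_inv_distrib, h3, inv_one]
    · show (a 2)⁻¹ ^ 2 = 1
      rw [inv_pow, h4, inv_one]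

lemma mem_Gsub {k m : ℕ} {t : Fin (m + 3) → ℂˣ} :
    t ∈ Gsub k m ↔ t 1 ^ (k + 3) * t 2 = 1 ∧
    (∀ i : Fin (m + 3), 3 ≤ (i : ℕ) → t i ^ 2 = 1) ∧
    (∏ i, t i) = 1 ∧ t 2 ^ 2 = 1 := Iff.rfl

lemma fin_one_eq (m : ℕ) : (1 : Fin (m+3)) = (0 : Fin (m+2)).succ := by ext; simp
lemma fin_two_eq (m : ℕ) : (2 : Fin (m+3)) = (1 : Fin (m+2)).succ := by ext; simp
lemma fin_one_eq' (m : ℕ) : (1 : Fin (m+2)) = (0 : Fin (m+1)).succ := by ext; simp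

lemma prod_split {m : ℕ} (t : Fin (m + 3) → ℂˣ) :
    (∏ i, t i) = t 0 * (t 1 * (t 2 * ∏ j : Fin m, t j.succ.succ.succ)) := by
  rw [Fin.prod_univ_succ, Fin.prod_univ_succ, Fin.prod_univ_succ]
  rw [fin_one_eq, fin_two_eq, fin_one_eq']

noncomputable def dEquiv (k m : ℕ) :
    (Gsub k m) ≃* (rootsOfUnity (2 * k + 6) ℂ × (Fin m → rootsOfUnity 2 ℂ)) where
  toFun t := (⟨(t : Fin (m+3) → ℂˣ) 1, by
      rcases t.2 with ⟨h1, h2, h3, h4⟩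
      rw [mem_rootsOfUnity, show (2 * k + 6) = (k + 3) * 2 from by ring, pow_mul,
        eq_inv_of_mul_eq_one_left h1, inv_pow, h4, inv_one]⟩,
    fun j => ⟨(t : Fin (m+3) → ℂˣ) j.succ.succ.succ, by
      rcases t.2 with ⟨h1, h2, h3, h4⟩
      rw [mem_rootsOfUnity]
      exact h2 _ (by simp)⟩)
  invFun p := ⟨Fin.cons ((p.1 : ℂˣ) ^ (k + 2) * (∏ j, (p.2 j : ℂˣ))⁻¹)
      (Fin.cons (p.1 : ℂˣ) (Fin.cons (((p.1 : ℂˣ) ^ (k + 3))⁻¹) (fun j => (p.2 j : ℂˣ)))), by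
    obtain ⟨a, f⟩ := p
    have ha : (a : ℂˣ) ^ (2 * k + 6) = 1 := mem_rootsOfUnity _ _ |>.mp a.2
    have hf : ∀ j, (f j : ℂˣ) ^ 2 = 1 := fun j => mem_rootsOfUnity _ _ |>.mp (f j).2
    refine ⟨?_, fun i hi => ?_, ?_, ?_⟩
    · rw [fin_one_eq, fin_two_eq, Fin.cons_succ, Fin.cons_succ, fin_one_eq', Fin.cons_succ,
        Fin.cons_zero, Fin.cons_zero, mul_inv_cancel]
    · induction i using Fin.cases with
      | zero => simp at hi
      | succ i =>
        induction i using Fin.cases with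
        | zero => simp at hi
        | succ i =>
          induction i using Fin.cases with
          | zero => simp [Nat.mod_eq_of_lt (show 2 < m + 3 by omega)] at hi
          | succ i => simp only [Fin.cons_succ]; exact hf i
    · rw [prod_split]
      simp only [Fin.cons_zero, fin_one_eq, fin_two_eq, fin_one_eq', Fin.cons_succ,
        Fin.cons_zero]
      group
      rw [mul_right_comm ((a:ℂˣ) ^ (2 + (k:ℤ))), ← zpow_add, show (2 + (k:ℤ)) + (-2 - k) = 0 from by ring,
        zpow_zero, one_mul, zpow_neg_one, inv_mul_cancel]
    · rw [fin_two_eq, Fin.cons_succ, fin_one_eq', Fin.cons_succ, Fin.cons_zero,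
        inv_pow, ← pow_mul, show (k+3)*2 = 2*k+6 from by ring, ha, inv_one]⟩
  left_inv := by
    rintro ⟨t, h1, h2, h3, h4⟩
    have h2' : t 2 = (t 1 ^ (k + 3))⁻¹ := eq_inv_of_mul_eq_one_right h1
    apply Subtype.ext
    funext i
    induction i using Fin.cases with
    | zero =>
      simp only [Fin.cons_zero]
      rw [prod_split] at h3
      have h0 : t 0 = (t 1 * (t 2 * ∏ j : Fin m, t j.succ.succ.succ))⁻¹ :=
        eq_inv_of_mul_eq_one_left h3
      rw [h0, h2']
      group
      exact mul_comm _ _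
    | succ i =>
      induction i using Fin.cases with
      | zero => simp [Fin.cons_succ, Fin.cons_zero, ← fin_one_eq]
      | succ i =>
        induction i using Fin.cases with
        | zero =>
          simp only [Fin.cons_succ, Fin.cons_zero]
          rw [show ((0 : Fin (m+1)).succ.succ) = (2 : Fin (m+3)) from by ext; simp, h2']
        | succ i => simp [Fin.cons_succ]
  right_inv := by
    rintro ⟨a, f⟩
    refine Prod.ext ?_ ?_
    · apply Subtype.ext
      simp only [fin_one_eq, Fin.cons_succ, Fin.cons_zero]
    · funext j
      exact Subtype.ext (by simp [Fin.cons_succ])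
  map_mul' := by intro a b; ext <;> rfl

/-- For `Γ = { t ∈ (ℂ*)^{n+2} : t₁^{ℓ−1}t₂ = t₂² = t₃² = ⋯ = t_{n+1}² = t₀t₁⋯t_{n+1} }`
and the character `χ : γ ↦ t₂²`, the kernel of `χ` (inside `Γ`) is isomorphic to
`μ_{2ℓ−2} × (μ₂)^{n−1}`. -/
theorem ker_chi_type_D (ℓ n : ℕ) (hℓ : 4 ≤ ℓ) (hn : 1 ≤ n)
    (χ : (Fin (n + 2) → ℂˣ) →* ℂˣ)
    (hχ : χ = (powMonoidHom 2).comp (Pi.evalMonoidHom (fun _ => ℂˣ) 2))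
    (K : Subgroup (Fin (n + 2) → ℂˣ))
    (hK : K = ((((powMonoidHom (ℓ - 1)).comp (Pi.evalMonoidHom (fun _ => ℂˣ) 1) *
          Pi.evalMonoidHom (fun _ => ℂˣ) 2) / χ)).ker ⊓
      (⨅ (i : Fin (n + 2)) (_ : 3 ≤ (i : ℕ)),
        (((powMonoidHom 2).comp (Pi.evalMonoidHom (fun _ => ℂˣ) i) / χ)).ker) ⊓
      ((∏ i : Fin (n + 2), Pi.evalMonoidHom (fun _ => ℂˣ) i) / χ).ker ⊓
      χ.ker) :
    Nonempty (K ≃* (rootsOfUnity (2 * ℓ - 2) ℂ × (Fin (n - 1) → rootsOfUnity 2 ℂ))) := by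
  subst hχ hK
  obtain ⟨k, rfl⟩ : ∃ k, ℓ = k + 4 := ⟨ℓ - 4, by omega⟩
  obtain ⟨m, rfl⟩ : ∃ m, n = m + 1 := ⟨n - 1, by omega⟩
  rw [show 2 * (k + 4) - 2 = 2 * k + 6 from by omega]
  refine ⟨(MulEquiv.subgroupCongr ?_).trans (dEquiv k m)⟩
  ext t
  simp only [Subgroup.mem_inf, MonoidHom.mem_ker, Subgroup.mem_iInf,
    MonoidHom.div_apply, MonoidHom.mul_apply, MonoidHom.coe_comp, Function.comp_apply,
    Pi.evalMonoidHom_apply, powMonoidHom_apply, MonoidHom.finset_prod_apply,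
    div_eq_one, mem_Gsub]
  constructor
  · rintro ⟨⟨⟨hA, hB⟩, hC⟩, hD⟩
    rw [hD] at hA hC
    refine ⟨hA, fun i hi => ?_, hC, hD⟩
    rw [hB i hi, hD]
  · rintro ⟨h1, h2, h3, h4⟩
    refine ⟨⟨⟨?_, fun i hi => ?_⟩, ?_⟩, h4⟩
    · rw [h4]; exact h1
    · rw [h4]; exact h2 i hi
    · rw [h4]; exact h3
end

section
/- Let L be the abelian group generated by symbols χ, χ₁, …, χ_{n+1} subject to the relations χ = (ℓ+1)χ₁ = 2χ₂ = ⋯ = 2χ_{n+1}, and set χ₀ := χ − (χ₁ + ⋯ + χ_{n+1}). Then for nonnegative integers k₀, k₁, the element k₀χ₀ + k₁χ₁ is an integer multiple of χ in L if and only if k₀ is even and (ℓ+1) divides k₀ − k₁. -/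
def lfun {m N : ℕ} (c : Fin m → ZMod N) : (Fin m → ℤ) →+ ZMod N where
  toFun x := ∑ i, (x i : ZMod N) * c i
  map_zero' := by simp
  map_add' x y := by
    simp only [Pi.add_apply, Int.cast_add, add_mul, Finset.sum_add_distrib]

lemma lfun_single {m N : ℕ} (c : Fin m → ZMod N) (j : Fin m) (a : ℤ) :
    lfun c (Pi.single j a) = (a : ZMod N) * c j := by
  simp [lfun, Pi.single_apply, apply_ite (Int.cast : ℤ → ZMod N)]


/-- In the abelian group `L` generated by `χ, χ₁, …, χ_{n+1}` with relations
`χ = (ℓ+1)χ₁ = 2χ₂ = ⋯ = 2χ_{n+1}`, with `χ₀ := χ − (χ₁ + ⋯ + χ_{n+1})`, the element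
`k₀χ₀ + k₁χ₁` is an integer multiple of `χ` iff `k₀` is even and `ℓ+1 ∣ k₀ − k₁`.
Here `L` is modelled as the quotient of the free abelian group on `n+2` generators
(`χ` at index `0`, `χᵢ` at index `i`) by the relations. -/
theorem degree_criterion_type_A (ℓ n : ℕ) (hℓ : 1 ≤ ℓ) (hn : 2 ≤ n)
    (R : AddSubgroup (Fin (n + 2) → ℤ))
    (hR : R = AddSubgroup.closure
      ({Pi.single 0 1 - (ℓ + 1 : ℤ) • Pi.single 1 1} ∪
       {x | ∃ i : Fin (n + 2), 2 ≤ (i : ℕ) ∧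
          x = Pi.single 0 1 - (2 : ℤ) • Pi.single i 1}))
    (χ₀ : Fin (n + 2) → ℤ)
    (hχ₀ : χ₀ = Pi.single 0 1 - ∑ i ∈ Finset.univ \ {0}, Pi.single i 1) :
    ∀ k₀ k₁ : ℕ,
      (∃ u : ℤ, (QuotientAddGroup.mk ((k₀ : ℤ) • χ₀ + (k₁ : ℤ) • Pi.single 1 1) :
          (Fin (n + 2) → ℤ) ⧸ R) =
        u • (QuotientAddGroup.mk (Pi.single 0 1) : (Fin (n + 2) → ℤ) ⧸ R)) ↔
      (2 ∣ k₀ ∧ (ℓ + 1 : ℤ) ∣ ((k₀ : ℤ) - (k₁ : ℤ))) := by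
  subst hχ₀
  -- basic Fin facts
  have h10 : (1 : Fin (n + 2)) ≠ 0 := by
    simp [Fin.ext_iff]
  have h01 : (0 : Fin (n + 2)) ≠ 1 := h10.symm
  set i2 : Fin (n + 2) := ⟨2, by omega⟩ with hi2
  have hi20 : i2 ≠ 0 := by simp [hi2, Fin.ext_iff]
  have hi21 : i2 ≠ 1 := by simp [hi2, Fin.ext_iff]
  set S : Finset (Fin (n + 2)) := Finset.univ \ {0, 1} with hS
  have h1S : (1 : Fin (n+2)) ∉ S := by simp [hS]
  have hsplit : Finset.univ \ {(0 : Fin (n+2))} = insert 1 S := by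
    ext j
    simp only [hS, Finset.mem_sdiff, Finset.mem_univ, Finset.mem_singleton,
      Finset.mem_insert, true_and]
    constructor
    · intro h; by_cases h1 : j = 1
      · exact Or.inl h1
      · exact Or.inr (by tauto)
    · rintro (rfl | h)
      · exact h10
      · tauto
  have hcardS : S.card = n := by
    rw [hS, Finset.card_sdiff_of_subset (by simp)]
    simp [Finset.card_insert_of_notMem, h01]
  have hi2S : i2 ∈ S := by simp [hS, hi20, hi21]
  intro k₀ k₁
  constructor
  · rintro ⟨u, hu⟩
    rw [show u • (QuotientAddGroup.mk (Pi.single 0 1) : _ ⧸ R) =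
        QuotientAddGroup.mk (u • Pi.single 0 1) from
        (map_zsmul (QuotientAddGroup.mk' R) u _).symm,
      QuotientAddGroup.eq_iff_sub_mem] at hu
    set c2 : Fin (n + 2) → ZMod 2 := fun i => if i = i2 then 1 else 0 with hc2
    have hc20 : c2 0 = 0 := if_neg (Ne.symm hi20)
    have hc21 : c2 1 = 0 := if_neg (Ne.symm hi21)
    have hker2 : R ≤ (lfun c2).ker := by
      rw [hR, AddSubgroup.closure_le]
      intro x hx
      simp only [Set.mem_union, Set.mem_singleton_iff, Set.mem_setOf_eq] at hx
      have h2x : ∀ x : ZMod 2, (2 : ℤ) • x = 0 := by decide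
      rcases hx with rfl | ⟨i, hi, rfl⟩ <;>
        rw [SetLike.mem_coe, AddMonoidHom.mem_ker, map_sub, map_zsmul, lfun_single, lfun_single] <;>
        simp [hc20, hc21, h2x]
    have h2 := AddMonoidHom.mem_ker.mp (hker2 hu)
    simp only [map_sub, map_add, map_zsmul, map_sum, lfun_single, Int.cast_one,
      one_mul, hc20, hc21, hsplit, Finset.sum_insert h1S] at h2
    have hsum2 : ∑ x ∈ S, c2 x = 1 := by simp [hc2, Finset.sum_ite_eq', hi2S]
    rw [hsum2] at h2
    simp [zsmul_eq_mul] at h2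
    have hk0 : 2 ∣ k₀ := (ZMod.natCast_eq_zero_iff k₀ 2).mp h2
    obtain ⟨m, hm⟩ := hk0
    refine ⟨⟨m, hm⟩, ?_⟩
    haveI : NeZero (2 * (ℓ + 1)) := ⟨by positivity⟩
    set cN : Fin (n + 2) → ZMod (2 * (ℓ + 1)) :=
      fun i => if i = 0 then 0 else if i = 1 then 2 else ((ℓ : ZMod (2 * (ℓ + 1))) + 1)
      with hcN
    have hcN0 : cN 0 = 0 := if_pos rfl
    have hcN1 : cN 1 = 2 := by rw [hcN]; simp [h10]
    have hcNS : ∀ i : Fin (n + 2), i ≠ 0 → i ≠ 1 → cN i = (ℓ : ZMod (2 * (ℓ + 1))) + 1 := by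
      intro i i0 i1; simp [hcN, i0, i1]
    have hzero : ((ℓ : ZMod (2 * (ℓ + 1))) + 1) * 2 = 0 := by
      have h := ZMod.natCast_self (2 * (ℓ + 1))
      push_cast at h
      linear_combination h
    have hkerN : R ≤ (lfun cN).ker := by
      rw [hR, AddSubgroup.closure_le]
      intro x hx
      simp only [Set.mem_union, Set.mem_singleton_iff, Set.mem_setOf_eq] at hx
      rcases hx with rfl | ⟨i, hi, rfl⟩ <;>
        rw [SetLike.mem_coe, AddMonoidHom.mem_ker, map_sub, map_zsmul, lfun_single,
          lfun_single]
      · rw [hcN0, hcN1]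
        push_cast [zsmul_eq_mul]
        linear_combination -hzero
      · have i0 : i ≠ 0 := by rintro rfl; simp at hi
        have i1 : i ≠ 1 := by rintro rfl; simp [Fin.val_one] at hi
        rw [hcN0, hcNS i i0 i1]
        push_cast [zsmul_eq_mul]
        linear_combination -hzero
    have hN2 := AddMonoidHom.mem_ker.mp (hkerN hu)
    simp only [map_sub, map_add, map_zsmul, map_sum, lfun_single, Int.cast_one,
      one_mul, hcN0, hcN1, hsplit, Finset.sum_insert h1S] at hN2
    have hsumN : ∑ x ∈ S, cN x = (n : ZMod (2 * (ℓ + 1))) * ((ℓ : ZMod (2 * (ℓ + 1))) + 1) := by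
      rw [Finset.sum_congr rfl (fun x hx => hcNS x (by simp [hS] at hx; tauto)
        (by simp [hS] at hx; tauto)), Finset.sum_const, hcardS, nsmul_eq_mul]
    rw [hsumN] at hN2
    push_cast [zsmul_eq_mul] at hN2
    have hmc : ((k₀ : ℕ) : ZMod (2 * (ℓ + 1))) = 2 * m := by rw [hm]; push_cast; ring
    have key : ((2 * ((k₁ : ℤ) - (k₀ : ℤ)) : ℤ) : ZMod (2 * (ℓ + 1))) = 0 := by
      push_cast
      linear_combination hN2 + ((n : ZMod (2 * (ℓ + 1))) * (m : ZMod (2 * (ℓ + 1)))) * hzero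
        + ((n : ZMod (2 * (ℓ + 1))) * ((ℓ : ZMod (2 * (ℓ + 1))) + 1)) * hmc
    have hdvd : ((2 * (ℓ + 1) : ℕ) : ℤ) ∣ 2 * ((k₁ : ℤ) - (k₀ : ℤ)) :=
      (ZMod.intCast_zmod_eq_zero_iff_dvd _ _).mp key
    have hdvd2 : (2 : ℤ) * ((ℓ : ℤ) + 1) ∣ 2 * ((k₁ : ℤ) - (k₀ : ℤ)) := by push_cast at hdvd; exact hdvd
    have := (mul_dvd_mul_iff_left (two_ne_zero (α := ℤ))).mp hdvd2
    exact dvd_sub_comm.mp this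
  · rintro ⟨⟨m, hm⟩, ⟨t, ht⟩⟩
    have hmz : (k₀ : ℤ) = 2 * (m : ℤ) := by exact_mod_cast hm
    refine ⟨(k₀ : ℤ) - t - n * m, ?_⟩
    rw [show ((k₀:ℤ) - t - n*m) • (QuotientAddGroup.mk (Pi.single 0 1) : _ ⧸ R) =
        QuotientAddGroup.mk (((k₀:ℤ) - t - n*m) • Pi.single 0 1) from
        (map_zsmul (QuotientAddGroup.mk' R) _ _).symm,
      QuotientAddGroup.eq_iff_sub_mem]
    have hSval : ∀ i ∈ S, 2 ≤ (i : ℕ) := by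
      intro i hiS
      simp only [hS, Finset.mem_sdiff, Finset.mem_univ, Finset.mem_insert,
        Finset.mem_singleton, true_and] at hiS
      push_neg at hiS
      obtain ⟨i0, i1⟩ := hiS
      have v0 : (i : ℕ) ≠ 0 := fun h => i0 (by rw [Fin.ext_iff]; simp [h])
      have v1 : (i : ℕ) ≠ 1 := fun h => i1 (by rw [Fin.ext_iff]; simp [h, Fin.val_one])
      omega
    have key : (k₀:ℤ) • ((Pi.single 0 1 : Fin (n+2) → ℤ) - ∑ i ∈ Finset.univ \ {0}, Pi.single i 1)
        + (k₁:ℤ) • Pi.single 1 1 - ((k₀:ℤ) - t - n*m) • Pi.single 0 1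
        = t • (Pi.single 0 1 - (ℓ + 1 : ℤ) • Pi.single 1 1)
          + (m:ℤ) • (∑ i ∈ S, (Pi.single 0 1 - (2:ℤ) • Pi.single i 1)) := by
      rw [hsplit, Finset.sum_insert h1S, Finset.sum_sub_distrib, Finset.sum_const, hcardS, ← Finset.smul_sum]
      match_scalars
      · push_cast; ring
      · push_cast; linear_combination -ht
      · push_cast; linear_combination -hmz
    rw [key, hR]
    refine add_mem (zsmul_mem (AddSubgroup.subset_closure ?_) t)
      (zsmul_mem (sum_mem fun i hiS => AddSubgroup.subset_closure ?_) (m:ℤ))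
    · exact Set.mem_union_left _ rfl
    · exact Set.mem_union_right _ ⟨i, hSval i hiS, rfl⟩
end

section
/- Let L be the abelian group generated by χ, χ₁, …, χ_{n+1} with relations χ = 3χ₁ + χ₂ = 3χ₂ = 2χ₃ = ⋯ = 2χ_{n+1} (n ≥ 2), and set χ₀ := χ − (χ₁ + ⋯ + χ_{n+1}). Then for nonnegative integers k₀, k₁, k₂, the element k₀χ₀ + k₁χ₁ + k₂χ₂ is an integer multiple of χ in L if and only if 9 divides 2k₀ + k₁ − 3k₂ and k₀ is even. -/
/-- weighted-coefficient additive hom -/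
def wsum {m : ℕ} {M : Type*} [AddCommGroup M] (c : Fin m → M) : (Fin m → ℤ) →+ M where
  toFun f := ∑ i, f i • c i
  map_zero' := by simp
  map_add' f g := by simp [add_smul, Finset.sum_add_distrib]

lemma wsum_single {m : ℕ} {M : Type*} [AddCommGroup M] (c : Fin m → M) (j : Fin m) (a : ℤ) :
    wsum c (Pi.single j a) = a • c j := by
  simp only [wsum, AddMonoidHom.coe_mk, ZeroHom.coe_mk]
  rw [Finset.sum_eq_single j]
  · simp
  · intro i _ hij; rw [Pi.single_eq_of_ne hij, zero_smul]
  · simp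

/-- In the abelian group `L` generated by `χ, χ₁, …, χ_{n+1}` with relations
`χ = 3χ₁ + χ₂ = 3χ₂ = 2χ₃ = ⋯ = 2χ_{n+1}` (type `E₇`, `n ≥ 2`), with
`χ₀ := χ − (χ₁ + ⋯ + χ_{n+1})`, the element `k₀χ₀ + k₁χ₁ + k₂χ₂` is an integer
multiple of `χ` iff `9 ∣ 2k₀ + k₁ − 3k₂` and `k₀` is even. -/
theorem degree_criterion_type_E7 (n : ℕ) (hn : 2 ≤ n)
    (R : AddSubgroup (Fin (n + 2) → ℤ))
    (hR : R = AddSubgroup.closure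
      ({Pi.single 0 1 - ((3 : ℤ) • Pi.single 1 1 + Pi.single 2 1),
        Pi.single 0 1 - (3 : ℤ) • Pi.single 2 1} ∪
       {x | ∃ i : Fin (n + 2), 3 ≤ (i : ℕ) ∧
          x = Pi.single 0 1 - (2 : ℤ) • Pi.single i 1}))
    (χ₀ : Fin (n + 2) → ℤ)
    (hχ₀ : χ₀ = Pi.single 0 1 - ∑ i ∈ Finset.univ \ {0}, Pi.single i 1) :
    ∀ k₀ k₁ k₂ : ℕ,
      (∃ u : ℤ, (QuotientAddGroup.mk
          ((k₀ : ℤ) • χ₀ + (k₁ : ℤ) • Pi.single 1 1 + (k₂ : ℤ) • Pi.single 2 1) :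
          (Fin (n + 2) → ℤ) ⧸ R) =
        u • (QuotientAddGroup.mk (Pi.single 0 1) : (Fin (n + 2) → ℤ) ⧸ R)) ↔
      ((9 : ℤ) ∣ (2 * (k₀ : ℤ) + (k₁ : ℤ) - 3 * (k₂ : ℤ)) ∧ 2 ∣ k₀) := by
  -- value facts
  have hv0 : ((0 : Fin (n+2)) : ℕ) = 0 := rfl
  have hv1 : ((1 : Fin (n+2)) : ℕ) = 1 := Fin.val_one n
  have hv2 : ((2 : Fin (n+2)) : ℕ) = 2 := by
    have : ((2 : Fin (n+2)) : ℕ) = 2 % (n+2) := by simp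
    rw [this, Nat.mod_eq_of_lt (by omega)]
  set i3 : Fin (n+2) := ⟨3, by omega⟩ with hi3
  -- the two invariant coefficient systems
  set c9 : Fin (n+2) → ZMod 9 := fun i => if (i:ℕ) = 1 then -1 else if (i:ℕ) = 2 then 3 else 0
    with hc9
  set c2 : Fin (n+2) → ZMod 2 := fun i => if (i:ℕ) = 3 then 1 else 0 with hc2
  have hc9_0 : c9 0 = 0 := by simp [hc9, hv0]
  have hc9_1 : c9 1 = -1 := by simp [hc9, hv1]
  have hc9_2 : c9 2 = 3 := by simp only [hc9, hv2]; norm_num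
  have hc2_0 : c2 0 = 0 := by simp [hc2, hv0]
  have hc2_1 : c2 1 = 0 := by simp [hc2, hv1]
  have hc2_2 : c2 2 = 0 := by simp only [hc2, hv2]; norm_num
  have hker9 : R ≤ (wsum c9).ker := by
    rw [hR, AddSubgroup.closure_le]
    rintro x (h | ⟨i, hi, rfl⟩)
    · simp only [Set.mem_insert_iff, Set.mem_singleton_iff] at h
      have key : ∀ y : Fin (n+2) → ℤ, wsum c9 y = 0 → y ∈ (wsum c9).ker := fun y hy => hy
      rcases h with rfl | rfl
      · refine key _ ?_
        simp only [map_sub, map_add, map_zsmul, wsum_single, one_smul, hc9_0, hc9_1, hc9_2]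
        decide
      · refine key _ ?_
        simp only [map_sub, map_zsmul, wsum_single, one_smul, hc9_0, hc9_2]
        decide
    · have hci : c9 i = 0 := by
        simp only [hc9]
        rw [if_neg (by omega), if_neg (by omega)]
      show wsum c9 _ = 0
      simp only [map_sub, map_zsmul, wsum_single, one_smul, hc9_0, hci, smul_zero, sub_zero]
  have hker2 : R ≤ (wsum c2).ker := by
    rw [hR, AddSubgroup.closure_le]
    rintro x (h | ⟨i, hi, rfl⟩)
    · simp only [Set.mem_insert_iff, Set.mem_singleton_iff] at h
      rcases h with rfl | rfl
      · show wsum c2 _ = 0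
        simp only [map_sub, map_add, map_zsmul, wsum_single, one_smul, hc2_0, hc2_1, hc2_2]
        decide
      · show wsum c2 _ = 0
        simp only [map_sub, map_zsmul, wsum_single, one_smul, hc2_0, hc2_2]
        decide
    · show wsum c2 _ = 0
      simp only [map_sub, map_zsmul, wsum_single, one_smul, hc2_0]
      rw [zsmul_eq_mul]
      have h20 : ((2:ℤ) : ZMod 2) = 0 := by decide
      rw [h20, zero_mul, sub_zero]
  -- sums of coefficients over univ \ {0}
  have hs9 : ∑ i ∈ Finset.univ \ {0}, c9 i = 2 := by
    have hsub : ({1, 2} : Finset (Fin (n+2))) ⊆ Finset.univ \ {0} := by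
      intro x hx
      simp only [Finset.mem_insert, Finset.mem_singleton] at hx
      simp only [Finset.mem_sdiff, Finset.mem_univ, Finset.mem_singleton, true_and]
      rcases hx with rfl | rfl
      · rw [Fin.ext_iff, hv0, hv1]; omega
      · rw [Fin.ext_iff, hv0, hv2]; omega
    have hzero : ∀ x ∈ Finset.univ \ {0}, x ∉ ({1, 2} : Finset (Fin (n+2))) → c9 x = 0 := by
      intro x _ hx
      simp only [Finset.mem_insert, Finset.mem_singleton] at hx
      push_neg at hx
      simp only [hc9]
      rw [if_neg (fun h => hx.1 (Fin.ext (by rw [h, hv1]))),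
        if_neg (fun h => hx.2 (Fin.ext (by rw [h, hv2])))]
    rw [← Finset.sum_subset hsub hzero,
      Finset.sum_pair (show (1 : Fin (n+2)) ≠ 2 from fun h => by
        rw [Fin.ext_iff, hv1, hv2] at h; omega), hc9_1, hc9_2]
    decide
  have hs2 : ∑ i ∈ Finset.univ \ {0}, c2 i = 1 := by
    rw [Finset.sum_eq_single_of_mem i3 ?_ ?_]
    · simp [hc2, hi3]
    · simp only [Finset.mem_sdiff, Finset.mem_univ, Finset.mem_singleton, true_and]
      intro h
      have h' := congrArg Fin.val h
      rw [hv0] at h'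
      exact absurd h' (by simp [hi3])
    · intro b _ hb
      simp only [hc2]
      rw [if_neg ?_]
      rw [← show (i3:ℕ) = 3 from rfl]
      exact fun h => hb (Fin.ext h)
  have hw9χ : wsum c9 χ₀ = -2 := by
    rw [hχ₀, map_sub, map_sum]
    simp only [wsum_single, one_smul]
    rw [hc9_0, hs9]
    decide
  have hw2χ : wsum c2 χ₀ = 1 := by
    rw [hχ₀, map_sub, map_sum]
    simp only [wsum_single, one_smul]
    rw [hc2_0, hs2]
    decide
  intro k₀ k₁ k₂
  set v : Fin (n+2) → ℤ :=
    (k₀ : ℤ) • χ₀ + (k₁ : ℤ) • Pi.single 1 1 + (k₂ : ℤ) • Pi.single 2 1 with hv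
  constructor
  · rintro ⟨u, hu⟩
    have hmem : v - u • Pi.single 0 1 ∈ R := by
      rw [← QuotientAddGroup.eq_iff_sub_mem, hu]
      exact (QuotientAddGroup.mk_zsmul _ _ _)
    have h9 : wsum c9 (v - u • Pi.single 0 1) = 0 := hker9 hmem
    have h2 : wsum c2 (v - u • Pi.single 0 1) = 0 := hker2 hmem
    simp only [hv, map_sub, map_add, map_zsmul, wsum_single, one_smul, hw9χ, hc9_0, hc9_1,
      hc9_2, smul_zero, sub_zero] at h9
    simp only [hv, map_sub, map_add, map_zsmul, wsum_single, one_smul, hw2χ, hc2_0, hc2_1,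
      hc2_2, smul_zero, sub_zero, add_zero] at h2
    rw [zsmul_eq_mul, zsmul_eq_mul, zsmul_eq_mul] at h9
    rw [zsmul_eq_mul, mul_one] at h2
    constructor
    · have h9' : ((2 * (k₀:ℤ) + (k₁:ℤ) - 3 * (k₂:ℤ) : ℤ) : ZMod 9) = 0 := by
        push_cast
        push_cast at h9
        linear_combination -h9
      exact_mod_cast (ZMod.intCast_zmod_eq_zero_iff_dvd _ 9).mp h9'
    · have := (ZMod.intCast_zmod_eq_zero_iff_dvd _ 2).mp h2
      exact_mod_cast this
  · rintro ⟨h9, h2⟩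
    have h2' : (2:ℤ) ∣ (k₀:ℤ) := by exact_mod_cast Int.natCast_dvd_natCast.mpr h2
    obtain ⟨cc, hcc⟩ := h2'
    obtain ⟨a, ha⟩ : (3:ℤ) ∣ ((k₀:ℤ) - (k₁:ℤ)) := by omega
    obtain ⟨b, hb⟩ : (3:ℤ) ∣ ((k₀:ℤ) - (k₂:ℤ) - a) := by omega
    set I3 : Finset (Fin (n+2)) := Finset.univ.filter (fun i => 3 ≤ (i:ℕ)) with hI3
    set r1 : Fin (n+2) → ℤ :=
      Pi.single 0 1 - ((3 : ℤ) • Pi.single 1 1 + Pi.single 2 1) with hr1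
    set r2 : Fin (n+2) → ℤ := Pi.single 0 1 - (3 : ℤ) • Pi.single 2 1 with hr2
    set w : Fin (n+2) → ℤ :=
      a • r1 + b • r2 + cc • ∑ i ∈ I3, (Pi.single 0 1 - (2:ℤ) • Pi.single i 1) with hw
    have hwR : w ∈ R := by
      rw [hw, hR]
      refine AddSubgroup.add_mem _ (AddSubgroup.add_mem _
        (AddSubgroup.zsmul_mem _ (AddSubgroup.subset_closure ?_) _)
        (AddSubgroup.zsmul_mem _ (AddSubgroup.subset_closure ?_) _))
        (AddSubgroup.zsmul_mem _ (AddSubgroup.sum_mem _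
          fun i hi => AddSubgroup.subset_closure ?_) _)
      · simp
      · simp
      · simp only [Set.mem_union, Set.mem_insert_iff, Set.mem_singleton_iff, Set.mem_setOf_eq]
        exact Or.inr ⟨i, by simpa [hI3] using hi, rfl⟩
    refine ⟨(v - w) 0, ?_⟩
    have key : v - w = ((v - w) 0) • Pi.single 0 1 := by
      funext j
      by_cases hj : j = 0
      · subst hj
        simp
      · have hj' : (j:ℕ) ≠ 0 := fun h => hj (Fin.ext (by rw [h, hv0]))
        rw [Pi.smul_apply, Pi.single_eq_of_ne hj, smul_zero]
        have hsum0 : ((∑ i ∈ Finset.univ \ {0}, Pi.single i 1 : Fin (n+2) → ℤ)) j = 1 := by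
          rw [Finset.sum_apply, Finset.sum_pi_single]
          rw [if_pos]
          simp only [Finset.mem_sdiff, Finset.mem_univ, Finset.mem_singleton, true_and]
          exact hj
        have hI3sum : ((∑ i ∈ I3, (Pi.single 0 1 - (2:ℤ) • Pi.single i 1) : Fin (n+2) → ℤ)) j
            = -2 * (if j ∈ I3 then 1 else 0) := by
          rw [Finset.sum_apply]
          simp only [Pi.sub_apply, Pi.smul_apply, smul_eq_mul]
          rw [Finset.sum_sub_distrib, ← Finset.mul_sum, Finset.sum_pi_single,
            Pi.single_eq_of_ne hj]
          simp only [Finset.sum_const, smul_zero, zero_sub]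
          ring
        rw [Pi.sub_apply]
        have hvj : v j = (k₀:ℤ) * χ₀ j + (k₁:ℤ) * (Pi.single 1 1 : Fin (n+2) → ℤ) j + (k₂:ℤ) * (Pi.single 2 1 : Fin (n+2) → ℤ) j := by
          rw [hv, Pi.add_apply, Pi.add_apply, Pi.smul_apply, Pi.smul_apply, Pi.smul_apply,
            smul_eq_mul, smul_eq_mul, smul_eq_mul]
        have hχj : χ₀ j = -1 := by
          rw [hχ₀, Pi.sub_apply, hsum0, Pi.single_eq_of_ne hj]
          ring
        have hr1j : r1 j = -(3 * (Pi.single 1 1 : Fin (n+2) → ℤ) j) - (Pi.single 2 1 : Fin (n+2) → ℤ) j := by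
          rw [hr1, Pi.sub_apply, Pi.add_apply, Pi.smul_apply, smul_eq_mul,
            Pi.single_eq_of_ne hj]
          ring
        have hr2j : r2 j = -(3 * (Pi.single 2 1 : Fin (n+2) → ℤ) j) := by
          rw [hr2, Pi.sub_apply, Pi.smul_apply, smul_eq_mul, Pi.single_eq_of_ne hj]
          ring
        have hwj : w j = a * r1 j + b * r2 j + cc * (-2 * (if j ∈ I3 then 1 else 0)) := by
          rw [hw, Pi.add_apply, Pi.add_apply, Pi.smul_apply, Pi.smul_apply, Pi.smul_apply,
            smul_eq_mul, smul_eq_mul, smul_eq_mul, hI3sum]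
        by_cases hj1 : (j:ℕ) = 1
        · have e1 : j = 1 := Fin.ext (by rw [hv1, hj1])
          have ne2 : j ≠ 2 := fun h => by rw [h, hv2] at hj1; omega
          have e3 : j ∉ I3 := by
            simp only [hI3, Finset.mem_filter, Finset.mem_univ, true_and]; omega
          have hs1 : (Pi.single 1 1 : Fin (n+2) → ℤ) j = 1 := by rw [e1, Pi.single_eq_same]
          have hs2 : (Pi.single 2 1 : Fin (n+2) → ℤ) j = 0 := Pi.single_eq_of_ne ne2 _
          rw [hvj, hwj, hχj, hr1j, hr2j, hs1, hs2, if_neg e3]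
          push_cast
          linarith [ha]
        · by_cases hj2 : (j:ℕ) = 2
          · have e2 : j = 2 := Fin.ext (by rw [hv2, hj2])
            have ne1 : j ≠ 1 := fun h => by rw [h, hv1] at hj2; omega
            have e3 : j ∉ I3 := by
              simp only [hI3, Finset.mem_filter, Finset.mem_univ, true_and]; omega
            have hs1 : (Pi.single 1 1 : Fin (n+2) → ℤ) j = 0 := Pi.single_eq_of_ne ne1 _
            have hs2 : (Pi.single 2 1 : Fin (n+2) → ℤ) j = 1 := by rw [e2, Pi.single_eq_same]
            rw [hvj, hwj, hχj, hr1j, hr2j, hs1, hs2, if_neg e3]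
            push_cast
            linarith [ha, hb]
          · have e3 : j ∈ I3 := by
              simp only [hI3, Finset.mem_filter, Finset.mem_univ, true_and]; omega
            have ne1 : j ≠ 1 := fun h => by rw [h, hv1] at hj1; omega
            have ne2 : j ≠ 2 := fun h => by rw [h, hv2] at hj2; omega
            have hs1 : (Pi.single 1 1 : Fin (n+2) → ℤ) j = 0 := Pi.single_eq_of_ne ne1 _
            have hs2 : (Pi.single 2 1 : Fin (n+2) → ℤ) j = 0 := Pi.single_eq_of_ne ne2 _
            rw [hvj, hwj, hχj, hr1j, hr2j, hs1, hs2, if_pos e3]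
            push_cast
            linarith [hcc]
    calc (QuotientAddGroup.mk v : (Fin (n + 2) → ℤ) ⧸ R)
        = QuotientAddGroup.mk (v - w) := by
          rw [QuotientAddGroup.eq_iff_sub_mem]
          simpa using hwR
      _ = QuotientAddGroup.mk (((v - w) 0) • Pi.single 0 1) := by rw [← key]
      _ = ((v - w) 0) • QuotientAddGroup.mk (Pi.single 0 1) :=
          QuotientAddGroup.mk_zsmul _ _ _
end

section
/- Let n ≥ 1 and let Γ = { (t₀,…,t_{n+1}) ∈ (ℂ*)^{n+2} : t₁⁵ = t₂³ = t₃² = ⋯ = t_{n+1}² = t₀t₁⋯t_{n+1} }. The set of γ = (t₀,…,t_{n+1}) ∈ Γ with t₁⁵ = 1 (i.e. γ ∈ ker χ) satisfying t_i ≠ 1 for all i ∈ {0,…,n+1} has exactly 8 elements, namely those with t₁ ∈ μ₅∖{1}, t₂ ∈ μ₃∖{1}, t₃ = ⋯ = t_{n+1} = −1, and t₀ = (−1)^{n−1}(t₁t₂)⁻¹. -/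
open Finset Polynomial

private lemma E8aux_fin_val2 (n : ℕ) (hn : 1 ≤ n) : ((2 : Fin (n+2)) : ℕ) = 2 := by
  have : ((2 : Fin (n+2)) : ℕ) = 2 % (n+2) := rfl
  rw [this, Nat.mod_eq_of_lt (by omega)]

private lemma E8aux_prod (n : ℕ) (hn : 1 ≤ n) (t : Fin (n+2) → ℂˣ)
    (ht : ∀ i : Fin (n+2), 3 ≤ (i : ℕ) → t i = -1) :
    (∏ i, t i) = t 0 * t 1 * t 2 * (-1) ^ (n - 1) := by
  classical
  set f : ℕ → ℂˣ := fun i => if h : i < n + 2 then t ⟨i, h⟩ else 1 with hf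
  have key : (∏ i, t i) = ∏ i ∈ range (n+2), f i := by
    rw [← Fin.prod_univ_eq_prod_range]
    refine Finset.prod_congr rfl fun i _ => ?_
    simp [hf, i.isLt, Fin.eta]
  have h3 : range (n + 2) = range (3 + (n - 1)) := by congr 1; omega
  rw [key, h3, Finset.prod_range_add]
  have h0 : f 0 = t 0 := by
    simp only [hf, dif_pos (by omega : (0:ℕ) < n + 2)]
    congr 1
  have h1 : f 1 = t 1 := by
    simp only [hf, dif_pos (by omega : (1:ℕ) < n + 2)]
    congr 1
  have h2 : f 2 = t 2 := by
    simp only [hf, dif_pos (by omega : (2:ℕ) < n + 2)]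
    congr 1
    exact (Fin.ext (by simp [E8aux_fin_val2 n hn]; omega)).symm
  have hrest : ∀ i ∈ range (n-1), f (3 + i) = -1 := by
    intro i hi
    rw [Finset.mem_range] at hi
    have hlt : 3 + i < n + 2 := by omega
    simp only [hf, dif_pos hlt]
    exact ht ⟨3 + i, hlt⟩ (by simp)
  rw [Finset.prod_congr rfl hrest, Finset.prod_const, Finset.card_range]
  simp [Finset.prod_range_succ, h0, h1, h2]

private lemma E8aux_neg_one_ne_one : (-1 : ℂˣ) ≠ 1 := by
  intro h
  have := congrArg Units.val h
  simp only [Units.val_neg, Units.val_one] at this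
  norm_num at this

private lemma E8aux_sq (x : ℂˣ) (h : x ^ 2 = 1) (hx : x ≠ 1) : x = -1 := by
  have hc : (x : ℂ) * (x : ℂ) = 1 := by
    have := congrArg Units.val h
    rw [Units.val_pow_eq_pow_val, Units.val_one, pow_two] at this
    exact this
  rcases mul_self_eq_one_iff.mp hc with h1 | h1
  · exact absurd (Units.ext h1) hx
  · exact Units.ext (by simp [h1])

private lemma E8aux_t0_ne (n : ℕ) (t1 t2 : ℂˣ) (h1 : t1 ^ 5 = 1) (h1' : t1 ≠ 1)
    (h2 : t2 ^ 3 = 1) : (-1 : ℂˣ) ^ (n - 1) * (t1 * t2)⁻¹ ≠ 1 := by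
  intro h
  rw [mul_inv_eq_one] at h
  have h15 : (t1 * t2) ^ 15 = 1 := by
    rw [mul_pow, show (15 : ℕ) = 5 * 3 from rfl, pow_mul, h1, one_pow,
      show (5 * 3 : ℕ) = 3 * 5 from rfl, pow_mul, h2, one_pow, one_mul]
  rcases Nat.even_or_odd (n - 1) with he | ho
  · rw [he.neg_one_pow] at h
    have hmul : t1 * t2 = 1 := h.symm
    have ht2 : t2 = t1⁻¹ := eq_inv_of_mul_eq_one_right hmul
    have h3 : t1 ^ 3 = 1 := by
      rw [ht2, inv_pow, inv_eq_one] at h2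
      exact h2
    have hsq : t1 ^ 2 = 1 := by
      have := h1
      rw [show (5 : ℕ) = 3 + 2 from rfl, pow_add, h3, one_mul] at this
      exact this
    have : t1 = 1 := by
      have := h3
      rw [show (3 : ℕ) = 2 + 1 from rfl, pow_add, hsq, one_mul, pow_one] at this
      exact this
    exact h1' this
  · rw [ho.neg_one_pow] at h
    rw [← h, (by decide : Odd 15).neg_one_pow] at h15
    exact E8aux_neg_one_ne_one h15

private lemma E8aux_ncard (n : ℕ) (hn : 1 ≤ n)
    (T : Set (Fin (n + 2) → ℂˣ))
    (hT : T = {t | t 1 ^ 5 = 1 ∧ t 1 ≠ 1 ∧ t 2 ^ 3 = 1 ∧ t 2 ≠ 1 ∧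
        (∀ i : Fin (n + 2), 3 ≤ (i : ℕ) → t i = -1) ∧
        t 0 = (-1 : ℂˣ) ^ (n - 1) * (t 1 * t 2)⁻¹}) :
    T.ncard = 8 := by
  classical
  have fin2 := E8aux_fin_val2 n hn
  set A : Finset ℂ := (nthRootsFinset 5 (1 : ℂ)).erase 1 with hA
  set B : Finset ℂ := (nthRootsFinset 3 (1 : ℂ)).erase 1 with hB
  set f : (Fin (n+2) → ℂˣ) → ℂ × ℂ := fun t => ((t 1 : ℂ), (t 2 : ℂ)) with hf
  have hinj : Set.InjOn f T := by
    intro t ht s hs hfts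
    rw [hT, Set.mem_setOf_eq] at ht hs
    have e1 : t 1 = s 1 := Units.ext (congrArg Prod.fst hfts)
    have e2 : t 2 = s 2 := Units.ext (congrArg Prod.snd hfts)
    funext i
    by_cases hi0 : (i : ℕ) = 0
    · have hieq : i = 0 := Fin.ext (by simp [hi0])
      rw [hieq, ht.2.2.2.2.2, hs.2.2.2.2.2, e1, e2]
    · by_cases hi1 : (i : ℕ) = 1
      · have hieq : i = 1 := Fin.ext (by simp [hi1])
        rw [hieq, e1]
      · by_cases hi2 : (i : ℕ) = 2
        · have hieq : i = 2 := Fin.ext (by simp [hi2, fin2]; exact (Nat.mod_eq_of_lt (by omega)).symm)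
          rw [hieq, e2]
        · rw [ht.2.2.2.2.1 i (by omega), hs.2.2.2.2.1 i (by omega)]
  have himg : f '' T = ↑(A ×ˢ B) := by
    ext p
    simp only [Set.mem_image, Finset.coe_product, Set.mem_prod, Finset.mem_coe, hA, hB,
      Finset.mem_erase, Polynomial.mem_nthRootsFinset (by norm_num : 0 < 5),
      Polynomial.mem_nthRootsFinset (by norm_num : 0 < 3)]
    constructor
    · rintro ⟨t, ht, rfl⟩
      rw [hT, Set.mem_setOf_eq] at ht
      obtain ⟨h5, h1ne, h3, h2ne, -, -⟩ := ht
      refine ⟨⟨fun h => h1ne (Units.ext h), ?_⟩, fun h => h2ne (Units.ext h), ?_⟩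
      · rw [hf]; rw [← Units.val_pow_eq_pow_val, h5, Units.val_one]
      · rw [hf]; rw [← Units.val_pow_eq_pow_val, h3, Units.val_one]
    · rintro ⟨⟨ha1, ha5⟩, hb1, hb3⟩
      obtain ⟨a, b⟩ := p
      have ha0 : a ≠ 0 := fun h => by simp [h] at ha5
      have hb0 : b ≠ 0 := fun h => by simp [h] at hb3
      set ua : ℂˣ := Units.mk0 a ha0 with hua
      set ub : ℂˣ := Units.mk0 b hb0 with hub
      have hua5 : ua ^ 5 = 1 := Units.ext (by rw [Units.val_pow_eq_pow_val]; simpa [hua] using ha5)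
      have hub3 : ub ^ 3 = 1 := Units.ext (by rw [Units.val_pow_eq_pow_val]; simpa [hub] using hb3)
      refine ⟨fun i => if (i : ℕ) = 0 then (-1) ^ (n-1) * (ua * ub)⁻¹
        else if (i : ℕ) = 1 then ua else if (i : ℕ) = 2 then ub else -1, ?_, ?_⟩
      · rw [hT, Set.mem_setOf_eq]
        simp only [Fin.val_one, Fin.val_zero, fin2]
        norm_num
        refine ⟨hua5, fun h => ha1 (by have := congrArg Units.val h; rwa [hua, Units.val_mk0, Units.val_one] at this), hub3, fun h => hb1 (by have := congrArg Units.val h; rwa [hub, Units.val_mk0, Units.val_one] at this), fun i hi => ?_⟩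
        rw [if_neg (by rintro rfl; simp at hi), if_neg (by omega), if_neg (by omega)]
      · simp only [hf, Fin.val_one, fin2]
        norm_num
        exact ⟨rfl, rfl⟩
  have : T.ncard = (f '' T).ncard := (Set.ncard_image_of_injOn hinj).symm
  rw [this, himg, Set.ncard_coe_finset, Finset.card_product, hA, hB]
  have c5 : (nthRootsFinset 5 (1 : ℂ)).card = 5 :=
    (Complex.isPrimitiveRoot_exp 5 (by norm_num)).card_nthRootsFinset
  have c3 : (nthRootsFinset 3 (1 : ℂ)).card = 3 :=
    (Complex.isPrimitiveRoot_exp 3 (by norm_num)).card_nthRootsFinset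
  rw [Finset.card_erase_of_mem, Finset.card_erase_of_mem, c5, c3]
  · exact (Polynomial.mem_nthRootsFinset (by norm_num) 1).mpr (one_pow 3)
  · exact (Polynomial.mem_nthRootsFinset (by norm_num) 1).mpr (one_pow 5)

/-- The set of `γ = (t₀,…,t_{n+1})` in the type `E₈` symmetry group
`Γ = { t : t₁⁵ = t₂³ = t₃² = ⋯ = t_{n+1}² = t₀t₁⋯t_{n+1} }` lying in `ker χ`
(i.e. `t₁⁵ = 1`) with `tᵢ ≠ 1` for all `i` has exactly `8` elements, namely those with
`t₁ ∈ μ₅∖{1}`, `t₂ ∈ μ₃∖{1}`, `t₃ = ⋯ = t_{n+1} = −1`, `t₀ = (−1)^{n−1}(t₁t₂)⁻¹`. -/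
theorem twisted_sector_count_type_E8 (n : ℕ) (hn : 1 ≤ n)
    (S : Set (Fin (n + 2) → ℂˣ))
    (hS : S = {t | t 1 ^ 5 = t 2 ^ 3 ∧
        (∀ i : Fin (n + 2), 3 ≤ (i : ℕ) → t i ^ 2 = t 1 ^ 5) ∧
        (∏ i, t i) = t 1 ^ 5 ∧ t 1 ^ 5 = 1 ∧ ∀ i, t i ≠ 1}) :
    S.ncard = 8 ∧
    S = {t | t 1 ^ 5 = 1 ∧ t 1 ≠ 1 ∧ t 2 ^ 3 = 1 ∧ t 2 ≠ 1 ∧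
        (∀ i : Fin (n + 2), 3 ≤ (i : ℕ) → t i = -1) ∧
        t 0 = (-1 : ℂˣ) ^ (n - 1) * (t 1 * t 2)⁻¹} := by
  have hST : S = {t : Fin (n+2) → ℂˣ | t 1 ^ 5 = 1 ∧ t 1 ≠ 1 ∧ t 2 ^ 3 = 1 ∧ t 2 ≠ 1 ∧
        (∀ i : Fin (n + 2), 3 ≤ (i : ℕ) → t i = -1) ∧
        t 0 = (-1 : ℂˣ) ^ (n - 1) * (t 1 * t 2)⁻¹} := by
    rw [hS]
    ext t
    simp only [Set.mem_setOf_eq]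
    constructor
    · rintro ⟨h12, h3, hprod, h5, hne⟩
      have ht3 : ∀ i : Fin (n + 2), 3 ≤ (i : ℕ) → t i = -1 := fun i hi =>
        E8aux_sq (t i) (by rw [h3 i hi, h5]) (hne i)
      have h2 : t 2 ^ 3 = 1 := by rw [← h12, h5]
      refine ⟨h5, hne 1, h2, hne 2, ht3, ?_⟩
      rw [E8aux_prod n hn t ht3, h5] at hprod
      have : t 0 * (t 1 * (t 2 * (-1) ^ (n-1))) = 1 := by
        rw [← mul_assoc, ← mul_assoc]; exact hprod
      have h0 := eq_inv_of_mul_eq_one_left this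
      rw [h0]
      rw [mul_inv, mul_inv]
      have hneg : ((-1 : ℂˣ) ^ (n-1))⁻¹ = (-1) ^ (n-1) := by
        rw [← inv_pow, inv_neg, inv_one]
      rw [hneg]
      simp [mul_comm, mul_assoc, mul_left_comm]
    · rintro ⟨h5, h1ne, h2, h2ne, ht3, h0⟩
      refine ⟨by rw [h5, h2], fun i hi => by rw [ht3 i hi, h5]; simp, ?_, h5, ?_⟩
      · rw [E8aux_prod n hn t ht3, h5, h0]
        have : ((-1:ℂˣ)^(n-1))*((-1:ℂˣ)^(n-1)) = 1 := by
          rw [← pow_add, ← two_mul, pow_mul]; simp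
        calc (-1:ℂˣ) ^ (n - 1) * (t 1 * t 2)⁻¹ * t 1 * t 2 * (-1) ^ (n - 1)
            = ((-1:ℂˣ)^(n-1))*((-1:ℂˣ)^(n-1)) * ((t 1 * t 2)⁻¹ * (t 1 * t 2)) := by
              simp [mul_comm, mul_assoc, mul_left_comm]
          _ = 1 := by rw [this, inv_mul_cancel, one_mul]
      · intro i
        by_cases hi0 : (i : ℕ) = 0
        · have : i = 0 := Fin.ext (by simp [hi0])
          rw [this, h0]
          exact E8aux_t0_ne n (t 1) (t 2) h5 h1ne h2
        · by_cases hi1 : (i : ℕ) = 1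
          · have : i = 1 := Fin.ext (by simp [hi1])
            rw [this]; exact h1ne
          · by_cases hi2 : (i : ℕ) = 2
            · have : i = 2 := Fin.ext (by simp [hi2, E8aux_fin_val2 n hn]; exact (Nat.mod_eq_of_lt (by omega)).symm)
              rw [this]; exact h2ne
            · rw [ht3 i (by omega)]
              exact E8aux_neg_one_ne_one
  exact ⟨hST ▸ E8aux_ncard n hn _ rfl, hST⟩
end
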